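/- For all real r, y > 0 and all s ∈ ℂ with Re(s) > 1/2, one has (Γ(s) / (2Γ(1/2))) · ∫_ℝ e^{irx} (x² + y²)^{−s} dx = (r/(2y))^{s − 1/2} · K_{s − 1/2}(ry). -/

import Mathlib

set_option autoImplicit false

/-!
The Fourier-transform formula
`(Γ(s)/(2Γ(1/2))) ∫_ℝ e^{irx}(x² + y²)^{−s} dx = (r/(2y))^{s−1/2} K_{s−1/2}(ry)`
for `r, y > 0` and `Re(s) > 1/2`.
-/

/-- The modified Bessel function of the second kind,
`K_ν(x) = ∫₀^∞ e^{−x·cosh t} cosh(νt) dt`. -/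
noncomputable def besselK (ν : ℂ) (x : ℝ) : ℂ :=
  ∫ t in Set.Ioi (0 : ℝ), (Real.exp (-x * Real.cosh t) : ℂ) * Complex.cosh (ν * t)

open MeasureTheory Set
open scoped Real

namespace BesselAux

/-- `u² ≤ 8 cosh u`. -/
lemma sq_le_eight_mul_cosh (u : ℝ) : u ^ 2 ≤ 8 * Real.cosh u := by
  have h2 : Real.exp (|u| / 2) ^ 2 = Real.exp |u| := by
    rw [sq, ← Real.exp_add, add_halves]
  have h1 : (1 + |u| / 2) ^ 2 ≤ Real.exp |u| := by
    have h := Real.add_one_le_exp (|u| / 2)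
    nlinarith [Real.exp_pos (|u| / 2), abs_nonneg u]
  have h3 : Real.exp |u| ≤ 2 * Real.cosh u := by
    rw [Real.cosh_eq]
    rcases abs_cases u with ⟨h, _⟩ | ⟨h, _⟩ <;> rw [h] <;>
      nlinarith [Real.exp_pos u, Real.exp_pos (-u)]
  nlinarith [abs_nonneg u, sq_abs u]

/-- cpow of a positive real as a complex exponential. -/
lemma ofReal_cpow_eq_exp {T : ℝ} (hT : 0 < T) (w : ℂ) :
    (T : ℂ) ^ w = Complex.exp ((Real.log T : ℂ) * w) := by
  rw [Complex.cpow_def_of_ne_zero (Complex.ofReal_ne_zero.mpr hT.ne'),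
    Complex.ofReal_log hT.le]

/-- Integrability of `(x²+y²)^(-σ)` over `ℝ` for `σ > 1/2`. -/
lemma integrable_sq_add_sq_rpow {y : ℝ} (hy : 0 < y) {σ : ℝ} (hσ : 1 / 2 < σ) :
    Integrable (fun x : ℝ => (x ^ 2 + y ^ 2) ^ (-σ)) := by
  have hσ0 : 0 < σ := by linarith
  have hbase0 : Integrable (fun x : ℝ => ((1 : ℝ) + ‖x‖ ^ 2) ^ (-(2 * σ) / 2)) :=
    integrable_rpow_neg_one_add_norm_sq (E := ℝ)
      (by simpa using by linarith : (Module.finrank ℝ ℝ : ℝ) < 2 * σ)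
  have hbase : Integrable (fun x : ℝ => ((1 : ℝ) + x ^ 2) ^ (-σ)) := by
    simpa [Real.norm_eq_abs, sq_abs, show -(2 * σ) / 2 = -σ by ring] using hbase0
  set m : ℝ := min 1 (y ^ 2) with hm
  have hm0 : 0 < m := lt_min one_pos (by positivity)
  refine (hbase.const_mul (m ^ (-σ))).mono' ?_ ?_
  · apply Measurable.aestronglyMeasurable
    fun_prop
  · filter_upwards with x
    have hx1 : (0:ℝ) < 1 + x ^ 2 := by positivity
    have hxy : (0:ℝ) < x ^ 2 + y ^ 2 := by positivity
    have hle : m * (1 + x ^ 2) ≤ x ^ 2 + y ^ 2 := by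
      have h1 : m ≤ 1 := min_le_left _ _
      have h2 : m ≤ y ^ 2 := min_le_right _ _
      nlinarith [sq_nonneg x]
    rw [Real.norm_eq_abs, abs_of_nonneg (Real.rpow_nonneg hxy.le _)]
    calc (x ^ 2 + y ^ 2) ^ (-σ) ≤ (m * (1 + x ^ 2)) ^ (-σ) :=
          Real.rpow_le_rpow_of_nonpos (by positivity) hle (by linarith)
      _ = m ^ (-σ) * ((1 : ℝ) + x ^ 2) ^ (-σ) := Real.mul_rpow hm0.le hx1.le

/-- Integrability of the scaled Gamma integrand. -/
lemma integrableOn_cpow_mul_exp {s : ℂ} (hs : 0 < s.re) {a : ℝ} (ha : 0 < a) :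
    IntegrableOn (fun t : ℝ => (t : ℂ) ^ (s - 1) * Complex.exp (-((a : ℂ) * (t : ℂ)))) (Ioi 0) := by
  have h0 := Complex.GammaIntegral_convergent hs
  have h1 : IntegrableOn (fun t : ℝ => Complex.exp (-(a * t : ℝ)) * ((a * t : ℝ) : ℂ) ^ (s - 1))
      (Ioi 0) := by
    have := (integrableOn_Ioi_comp_mul_left_iff
      (fun x : ℝ => (Complex.exp (-x) * (x : ℂ) ^ (s - 1))) 0 ha).mpr (by simpa using h0)
    simpa [Complex.ofReal_neg] using this
  have h2 : IntegrableOn (fun t : ℝ => ((a:ℂ) ^ (1 - s)) * (Complex.exp (-(a * t : ℝ)) * ((a * t : ℝ) : ℂ) ^ (s - 1))) (Ioi 0) :=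
    h1.const_mul ((a : ℂ) ^ (1 - s))
  refine h2.congr_fun (fun t ht => ?_) measurableSet_Ioi
  have ht' : (0:ℝ) < t := ht
  have hone : (a : ℂ) ^ (1 - s) * (a : ℂ) ^ (s - 1) = 1 := by
    rw [← Complex.cpow_add _ _ (Complex.ofReal_ne_zero.mpr ha.ne')]
    norm_num
  push_cast
  rw [Complex.mul_cpow_ofReal_nonneg ha.le ht'.le]
  calc ((a:ℂ) ^ (1-s)) * (Complex.exp (-((a:ℂ) * (t:ℂ))) * ((a:ℂ) ^ (s-1) * (t:ℂ) ^ (s-1)))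
      = ((a:ℂ) ^ (1-s) * (a:ℂ) ^ (s-1)) * ((t:ℂ) ^ (s-1) * Complex.exp (-((a:ℂ) * (t:ℂ)))) := by
        ring
    _ = (t:ℂ) ^ (s-1) * Complex.exp (-((a:ℂ) * (t:ℂ))) := by rw [hone, one_mul]

/-- Integrability of `e^{νu} e^{-a cosh u}` over `ℝ`. -/
lemma integrable_exp_mul_sub_cosh (ν : ℂ) {a : ℝ} (ha : 0 < a) :
    Integrable fun u : ℝ => Complex.exp (ν * u) * (Real.exp (-a * Real.cosh u) : ℂ) := by
  have hb : ((-(a / 8) : ℝ) : ℂ).re < 0 := by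
    simp only [Complex.ofReal_re]; linarith
  have hint : Integrable fun u : ℝ =>
      Complex.exp (((-(a / 8) : ℝ) : ℂ) * u ^ 2 + (ν.re : ℂ) * u + 0) :=
    integrable_cexp_quadratic' hb _ _
  refine (hint.norm).mono' ?_ ?_
  · apply Continuous.aestronglyMeasurable
    continuity
  · filter_upwards with u
    have h1 : ‖Complex.exp (ν * u) * (Real.exp (-a * Real.cosh u) : ℂ)‖
        = Real.exp (ν.re * u + (-a * Real.cosh u)) := by
      rw [norm_mul, Complex.norm_exp,
        Complex.norm_real, Real.norm_eq_abs, abs_of_pos (Real.exp_pos _),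
        show (ν * (u:ℂ)).re = ν.re * u from by simp [Complex.mul_re], ← Real.exp_add]
    have h2 : ‖Complex.exp (((-(a / 8) : ℝ) : ℂ) * u ^ 2 + (ν.re : ℂ) * u + 0)‖
        = Real.exp (-(a / 8) * u ^ 2 + ν.re * u) := by
      rw [Complex.norm_exp]
      congr 1
      simp [Complex.add_re, Complex.mul_re, Complex.ofReal_re, Complex.ofReal_im, pow_two,
        Complex.mul_im]
    rw [h1, h2]
    apply Real.exp_le_exp.mpr
    have := sq_le_eight_mul_cosh u
    nlinarith [this, ha]

/-- The full-line integral equals `2 besselK`. -/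
lemma integral_eq_two_besselK (ν : ℂ) {a : ℝ} (ha : 0 < a) :
    ∫ u : ℝ, Complex.exp (ν * u) * (Real.exp (-a * Real.cosh u) : ℂ) = 2 * besselK ν a := by
  set g : ℝ → ℂ := fun u => Complex.exp (ν * u) * (Real.exp (-a * Real.cosh u) : ℂ) with hg
  have hint : Integrable g := integrable_exp_mul_sub_cosh ν ha
  have hint' : Integrable fun u : ℝ => g (-u) := hint.comp_neg
  have hsplit : ∫ u : ℝ, g u = (∫ u in Iic (0:ℝ), g u) + ∫ u in Ioi (0:ℝ), g u :=
    (intervalIntegral.integral_Iic_add_Ioi hint.integrableOn hint.integrableOn).symm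
  have hneg : ∫ u in Iic (0:ℝ), g u = ∫ u in Ioi (0:ℝ), g (-u) := by
    rw [integral_comp_neg_Ioi, neg_zero]
  have hadd : (∫ u in Ioi (0:ℝ), g (-u)) + ∫ u in Ioi (0:ℝ), g u
      = ∫ u in Ioi (0:ℝ), (g (-u) + g u) :=
    (integral_add hint'.integrableOn hint.integrableOn).symm
  rw [hsplit, hneg, hadd]
  rw [besselK, ← integral_const_mul]
  refine setIntegral_congr_fun measurableSet_Ioi (fun u _ => ?_)
  have : g (-u) + g u
      = (Real.exp (-a * Real.cosh u) : ℂ) * (Complex.exp (-(ν * u)) + Complex.exp (ν * u)) := by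
    simp only [hg, Real.cosh_neg, Complex.ofReal_neg]
    ring_nf
  rw [this, Complex.cosh]
  push_cast
  ring

/-- Change of variables `t = c₀ eᵘ` mapping `ℝ` onto `(0,∞)`. -/
lemma integral_Ioi_comp_exp (c0 : ℝ) (hc0 : 0 < c0) (g : ℝ → ℂ) :
    ∫ z in Ioi (0:ℝ), g z = ∫ u : ℝ, (c0 * Real.exp u) • g (c0 * Real.exp u) := by
  have himg : (fun u : ℝ => c0 * Real.exp u) '' univ = Ioi 0 := by
    rw [image_univ]
    ext z
    simp only [mem_range, mem_Ioi]
    constructor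
    · rintro ⟨u, rfl⟩; positivity
    · intro hz
      refine ⟨Real.log (z / c0), ?_⟩
      rw [Real.exp_log (by positivity)]
      field_simp
  have hderiv : ∀ u ∈ (univ : Set ℝ), HasDerivWithinAt (fun u : ℝ => c0 * Real.exp u)
      (c0 * Real.exp u) univ u := fun u _ =>
    ((Real.hasDerivAt_exp u).const_mul c0).hasDerivWithinAt
  have hinj : InjOn (fun u : ℝ => c0 * Real.exp u) univ := by
    intro p _ q _ h
    exact Real.exp_injective (mul_left_cancel₀ hc0.ne' h)
  have := integral_image_eq_integral_abs_deriv_smul MeasurableSet.univ hderiv hinj g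
  rw [himg, Measure.restrict_univ] at this
  rw [this]
  refine integral_congr_ae (Filter.Eventually.of_forall fun u => ?_)
  dsimp only
  rw [abs_of_pos (by positivity : (0:ℝ) < c0 * Real.exp u)]

end BesselAux

open BesselAux Complex

set_option maxHeartbeats 1000000 in
/-- For all real `r, y > 0` and all `s ∈ ℂ` with `Re(s) > 1/2`,
`(Γ(s)/(2Γ(1/2))) ∫_ℝ e^{irx}(x² + y²)^{−s} dx = (r/(2y))^{s−1/2} K_{s−1/2}(ry)`. -/
theorem fourier_transform_besselK (r y : ℝ) (hr : 0 < r) (hy : 0 < y) (s : ℂ)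
    (hs : 1 / 2 < s.re) :
    (Complex.Gamma s / (2 * Complex.Gamma (1 / 2))) *
        ∫ x : ℝ, Complex.exp (Complex.I * (r : ℂ) * (x : ℂ)) * ((x ^ 2 + y ^ 2 : ℝ) : ℂ) ^ (-s)
      = ((r / (2 * y) : ℝ) : ℂ) ^ (s - 1 / 2) * besselK (s - 1 / 2) (r * y) := by
  have hπ : (0:ℝ) < π := Real.pi_pos
  have hs0 : 0 < s.re := by linarith
  have hc0 : 0 < r / (2 * y) := by positivity
  have hA : ∀ x : ℝ, (0:ℝ) < x ^ 2 + y ^ 2 := fun x => by positivity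
  set c0 : ℝ := r / (2 * y) with hc0def
  set ν : ℂ := s - 1 / 2 with hν
  set F : ℝ → ℝ → ℂ := fun x t => Complex.exp (Complex.I * (r : ℂ) * (x : ℂ)) *
      ((t : ℂ) ^ (s - 1) * Complex.exp (-((((x ^ 2 + y ^ 2 : ℝ)) : ℂ) * (t : ℂ)))) with hF
  set H : ℝ → ℂ := fun t => (t : ℂ) ^ (s - 1) *
      (((π : ℂ) / (t : ℂ)) ^ (1 / 2 : ℂ) *
        Complex.exp (-((t : ℂ) * (y : ℂ) ^ 2) - (Complex.I * (r : ℂ)) ^ 2 / (4 * -(t : ℂ))))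
    with hH
  -- Step 1 : Gamma representation
  have step1 : Complex.Gamma s *
      (∫ x : ℝ, Complex.exp (Complex.I * (r : ℂ) * (x : ℂ)) * ((x ^ 2 + y ^ 2 : ℝ) : ℂ) ^ (-s))
      = ∫ x : ℝ, ∫ t in Ioi (0:ℝ), F x t := by
    rw [← integral_const_mul]
    refine integral_congr_ae (.of_forall fun x => ?_)
    dsimp only
    have harg : ((x ^ 2 + y ^ 2 : ℝ) : ℂ).arg ≠ π := by
      rw [Complex.arg_ofReal_of_nonneg (hA x).le]
      exact Ne.symm Real.pi_ne_zero
    have hpow : ((x ^ 2 + y ^ 2 : ℝ) : ℂ) ^ (-s) = (1 / ((x ^ 2 + y ^ 2 : ℝ) : ℂ)) ^ s := by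
      rw [one_div, Complex.inv_cpow _ _ harg, Complex.cpow_neg]
    rw [hpow, mul_left_comm, mul_comm (Complex.Gamma s),
      ← Complex.integral_cpow_mul_exp_neg_mul_Ioi hs0 (hA x), hF]
    dsimp only
    rw [← integral_const_mul]
  -- Fubini
  have hFmeas : AEStronglyMeasurable (Function.uncurry F)
      ((volume : Measure ℝ).prod (volume.restrict (Ioi 0))) := by
    apply Measurable.aestronglyMeasurable
    rw [hF]
    unfold Function.uncurry
    fun_prop
  have hFint : Integrable (Function.uncurry F)
      ((volume : Measure ℝ).prod (volume.restrict (Ioi 0))) := by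
    rw [MeasureTheory.integrable_prod_iff hFmeas]
    constructor
    · refine .of_forall fun x => ?_
      simp only [Function.uncurry_apply_pair, hF]
      exact (integrableOn_cpow_mul_exp hs0 (hA x)).const_mul _
    · simp only [Function.uncurry_apply_pair]
      have hnorm : ∀ x : ℝ, (∫ t in Ioi (0:ℝ), ‖F x t‖)
          = (1 / (x ^ 2 + y ^ 2)) ^ s.re * Real.Gamma s.re := by
        intro x
        rw [← Real.integral_rpow_mul_exp_neg_mul_Ioi hs0 (hA x)]
        refine setIntegral_congr_fun measurableSet_Ioi (fun t ht => ?_)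
        have ht' : (0:ℝ) < t := ht
        rw [hF]
        dsimp only
        rw [norm_mul, norm_mul,
          Complex.norm_exp, Complex.norm_exp, Complex.norm_cpow_eq_rpow_re_of_pos ht']
        have e1 : (Complex.I * (r : ℂ) * (x : ℂ)).re = 0 := by simp
        have e2 : (-((((x ^ 2 + y ^ 2 : ℝ)) : ℂ) * (t : ℂ))).re = -((x ^ 2 + y ^ 2) * t) := by
          rw [← Complex.ofReal_mul, ← Complex.ofReal_neg, Complex.ofReal_re]
        rw [e1, e2, Real.exp_zero, one_mul]
        have e3 : (s - 1).re = s.re - 1 := by simp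
        rw [e3]
      have hint2 : Integrable (fun x : ℝ => (1 / (x ^ 2 + y ^ 2)) ^ s.re * Real.Gamma s.re) := by
        refine ((integrable_sq_add_sq_rpow hy hs).mul_const (Real.Gamma s.re)).congr
          (.of_forall fun x => ?_)
        dsimp only
        rw [Real.rpow_neg (hA x).le, ← Real.inv_rpow (hA x).le, one_div]
      exact hint2.congr (.of_forall fun x => (hnorm x).symm)
  have step2 : (∫ x : ℝ, ∫ t in Ioi (0:ℝ), F x t) = ∫ t in Ioi (0:ℝ), ∫ x : ℝ, F x t :=
    MeasureTheory.integral_integral_swap hFint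
  -- Step 3 : Gaussian integral
  have step3 : (∫ t in Ioi (0:ℝ), ∫ x : ℝ, F x t) = ∫ t in Ioi (0:ℝ), H t := by
    refine setIntegral_congr_fun measurableSet_Ioi (fun t ht => ?_)
    have ht' : (0:ℝ) < t := ht
    have hb : (-(t : ℂ)).re < 0 := by
      simpa using ht'
    calc (∫ x : ℝ, F x t)
        = ∫ x : ℝ, (t : ℂ) ^ (s - 1) * Complex.exp (-(t:ℂ) * (x:ℂ) ^ 2
            + Complex.I * (r:ℂ) * (x:ℂ) + -((t:ℂ) * (y:ℂ) ^ 2)) := by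
          refine integral_congr_ae (.of_forall fun x => ?_)
          rw [hF]
          dsimp only
          rw [mul_left_comm, ← Complex.exp_add]
          congr 1
          push_cast
          ring
      _ = (t : ℂ) ^ (s - 1) * ∫ x : ℝ, Complex.exp (-(t:ℂ) * (x:ℂ) ^ 2
            + Complex.I * (r:ℂ) * (x:ℂ) + -((t:ℂ) * (y:ℂ) ^ 2)) := integral_const_mul _ _
      _ = H t := by
          rw [integral_cexp_quadratic hb (Complex.I * (r:ℂ)) (-((t:ℂ) * (y:ℂ) ^ 2)), hH]
          dsimp only
          rw [neg_neg]
  -- Step 4 : change of variables t = c₀ eᵘ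
  have step4 : (∫ t in Ioi (0:ℝ), H t) = ((π : ℝ) : ℂ) ^ (1/2 : ℂ) * ((c0 : ℂ) ^ ν *
      ∫ u : ℝ, Complex.exp (ν * (u:ℂ)) * (Real.exp (-(r * y) * Real.cosh u) : ℂ)) := by
    rw [integral_Ioi_comp_exp c0 hc0 H, ← integral_const_mul, ← integral_const_mul]
    refine integral_congr_ae (.of_forall fun u => ?_)
    dsimp only
    have hT : (0:ℝ) < c0 * Real.exp u := by positivity
    have hTne : ((c0 * Real.exp u : ℝ) : ℂ) ≠ 0 := Complex.ofReal_ne_zero.mpr hT.ne'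
    set T : ℝ := c0 * Real.exp u with hTdef
    have hlogT : Real.log T = Real.log c0 + u := by
      rw [hTdef, Real.log_mul hc0.ne' (Real.exp_pos u).ne', Real.log_exp]
    have hreal : -(T * y ^ 2) - r ^ 2 / (4 * T) = -(r * y) * Real.cosh u := by
      rw [Real.cosh_eq, Real.exp_neg, hTdef, hc0def]
      field_simp
      ring
    have e5 : -((T:ℂ) * (y:ℂ) ^ 2) - (Complex.I * (r:ℂ)) ^ 2 / (4 * -(T:ℂ))
        = ((-(r * y) * Real.cosh u : ℝ) : ℂ) := by
      rw [← hreal, mul_pow, Complex.I_sq]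
      push_cast
      field_simp
    rw [Complex.real_smul, hH]
    dsimp only
    rw [e5]
    have e2 : ((T:ℝ) : ℂ) = Complex.exp ((Real.log T : ℝ) : ℂ) := by
      rw [← Complex.ofReal_exp, Real.exp_log hT]
    have e4 : ((π : ℝ) : ℂ) / (T : ℂ) = ((π / T : ℝ) : ℂ) := by push_cast; ring
    rw [ofReal_cpow_eq_exp hT (s - 1), e4,
      ofReal_cpow_eq_exp (by positivity : (0:ℝ) < π / T) (1/2 : ℂ),
      ofReal_cpow_eq_exp hπ (1/2 : ℂ), ofReal_cpow_eq_exp hc0 ν,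
      Real.log_div hπ.ne' hT.ne', e2, Complex.ofReal_exp (-(r * y) * Real.cosh u),
      ← Complex.exp_add, ← Complex.exp_add, ← Complex.exp_add, ← Complex.exp_add,
      ← Complex.exp_add, ← Complex.exp_add]
    congr 1
    rw [hν]
    push_cast [hlogT]
    ring
  -- Step 5 : Bessel K
  have step5 : (∫ u : ℝ, Complex.exp (ν * (u:ℂ)) * (Real.exp (-(r * y) * Real.cosh u) : ℂ))
      = 2 * besselK ν (r * y) := integral_eq_two_besselK ν (mul_pos hr hy)
  have key : Complex.Gamma s *
      (∫ x : ℝ, Complex.exp (Complex.I * (r : ℂ) * (x : ℂ)) * ((x ^ 2 + y ^ 2 : ℝ) : ℂ) ^ (-s))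
      = ((π : ℝ) : ℂ) ^ (1/2 : ℂ) * ((c0 : ℂ) ^ ν * (2 * besselK ν (r * y))) := by
    rw [step1, step2, step3, step4, step5]
  have hπne : ((π : ℝ) : ℂ) ^ (1/2 : ℂ) ≠ 0 := by
    simp [Complex.cpow_eq_zero_iff, Complex.ofReal_ne_zero, Real.pi_ne_zero]
  rw [Complex.Gamma_one_half_eq]
  rw [div_mul_eq_mul_div, key]
  field_simp
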